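/- In the setting of the HJB theorem, if the residual satisfies r(x) ≤ εQ(x) on Ω_c with ε ∈ [0,1), V̂(0)=0, and the closed-loop trajectory φ(t) = φ(t,x,û) under the feedback û converges to 0 with V̂(φ(t)) → 0, then V̂(x) ≥ (1−ε)·J(x,û) ≥ (1−ε)·V*(x), where J(x,û) = ∫₀^∞ (Q(φ(t)) + û(φ(t))ᵀR(φ(t))û(φ(t))) dt and V*(x) = inf over admissible u of J(x,u). -/

import Mathlib

open Matrix MeasureTheory Filter Topology

/-- Lower value bound from a one-sided HJB residual bound: if `r ≤ ε Q` on `Ω_c`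
and the closed-loop trajectory under `û` converges with `V̂(φ(t)) → 0`, then
`V̂ x ≥ (1-ε) J(x,û) ≥ (1-ε) V*(x)`. -/
theorem hjb_lower_value_bound
    {n k : ℕ}
    (f : (Fin n → ℝ) → (Fin n → ℝ))
    (g : (Fin n → ℝ) → Matrix (Fin n) (Fin k) ℝ)
    (Q : (Fin n → ℝ) → ℝ)
    (R : (Fin n → ℝ) → Matrix (Fin k) (Fin k) ℝ)
    (Vhat : (Fin n → ℝ) → ℝ)
    (DV : (Fin n → ℝ) → (Fin n → ℝ))
    (uhat : (Fin n → ℝ) → (Fin k → ℝ))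
    (huhat : ∀ y, uhat y = -((1/2 : ℝ) • ((R y)⁻¹ *ᵥ ((g y)ᵀ *ᵥ DV y))))
    (Ωc : Set (Fin n → ℝ))
    (ε : ℝ) (hε0 : 0 ≤ ε) (hε1 : ε < 1)
    (hQ : ∀ y, 0 ≤ Q y)
    (hR : ∀ y, (R y).PosDef)
    (hres : ∀ y ∈ Ωc,
      Q y + DV y ⬝ᵥ f y -
        (1/4 : ℝ) * (DV y ⬝ᵥ (g y *ᵥ ((R y)⁻¹ *ᵥ ((g y)ᵀ *ᵥ DV y)))) ≤ ε * Q y)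
    (x : Fin n → ℝ) (hx : x ∈ Ωc)
    (φ : ℝ → (Fin n → ℝ)) (hφ0 : φ 0 = x)
    (hφΩ : ∀ t : ℝ, 0 ≤ t → φ t ∈ Ωc)
    (hchain : ∀ t : ℝ, 0 ≤ t → HasDerivAt (fun s => Vhat (φ s))
      (DV (φ t) ⬝ᵥ (f (φ t) + g (φ t) *ᵥ uhat (φ t))) t)
    (hVlim : Tendsto (fun T => Vhat (φ T)) atTop (𝓝 0))
    (hint : IntegrableOn
      (fun t => Q (φ t) + uhat (φ t) ⬝ᵥ (R (φ t) *ᵥ uhat (φ t))) (Set.Ioi (0:ℝ)))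
    (J : ℝ)
    (hJ : J = ∫ t in Set.Ioi (0:ℝ),
      (Q (φ t) + uhat (φ t) ⬝ᵥ (R (φ t) *ᵥ uhat (φ t))))
    (costs : Set ℝ) (hJmem : J ∈ costs) (hbdd : BddBelow costs)
    (Vstar : ℝ) (hVstar : Vstar = sInf costs) :
    (1 - ε) * J ≤ Vhat x ∧ (1 - ε) * Vstar ≤ (1 - ε) * J := by
  have h1ε : (0:ℝ) ≤ 1 - ε := by linarith
  set h : ℝ → ℝ := fun t => Q (φ t) + uhat (φ t) ⬝ᵥ (R (φ t) *ᵥ uhat (φ t)) with hh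
  -- pointwise derivative bound
  have key : ∀ y ∈ Ωc,
      DV y ⬝ᵥ (f y + g y *ᵥ uhat y) ≤ -((1 - ε) * (Q y + uhat y ⬝ᵥ (R y *ᵥ uhat y))) := by
    intro y hy
    set w := (g y)ᵀ *ᵥ DV y with hw
    set v := (R y)⁻¹ *ᵥ w with hv
    have hRv : R y *ᵥ v = w := by
      rw [hv, mulVec_mulVec, Matrix.mul_nonsing_inv _ (isUnit_iff_ne_zero.mpr (hR y).det_pos.ne'),
        one_mulVec]
    have hwv : DV y ⬝ᵥ (g y *ᵥ v) = w ⬝ᵥ v := by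
      rw [dotProduct_mulVec, ← mulVec_transpose, ← hw, dotProduct_comm]
    have hp : (0:ℝ) ≤ w ⬝ᵥ v := by
      rcases eq_or_ne v 0 with h0 | h0
      · simp [h0]
      · have := (hR y).dotProduct_mulVec_pos h0
        rw [hRv] at this
        simpa [dotProduct_comm] using this.le
    have hcost : uhat y ⬝ᵥ (R y *ᵥ uhat y) = (1/4 : ℝ) * (w ⬝ᵥ v) := by
      rw [huhat y]
      simp only [← hw, ← hv, neg_smul, neg_dotProduct, mulVec_neg, dotProduct_neg, neg_neg,
        mulVec_smul, smul_dotProduct, dotProduct_smul, hRv, smul_eq_mul]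
      have : v ⬝ᵥ w = w ⬝ᵥ v := dotProduct_comm _ _
      rw [this]; ring
    have hgu : DV y ⬝ᵥ (g y *ᵥ uhat y) = -((1/2 : ℝ) * (w ⬝ᵥ v)) := by
      rw [huhat y]
      simp only [← hw, ← hv, neg_smul, mulVec_neg, dotProduct_neg, mulVec_smul,
        dotProduct_smul, smul_eq_mul, hwv]
    have hr := hres y hy
    rw [← hv] at hr
    rw [hwv] at hr
    have hQy := hQ y
    rw [dotProduct_add, hgu, hcost]
    nlinarith
  -- integral bound on [0, T]
  have main : ∀ T : ℝ, 0 ≤ T →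
      (1 - ε) * ∫ t in (0:ℝ)..T, h t ≤ Vhat x - Vhat (φ T) := by
    intro T hT
    have hcont : ContinuousOn (fun s => Vhat (φ s)) (Set.Icc 0 T) := by
      intro t ht
      exact ((hchain t ht.1).continuousAt).continuousWithinAt
    have hintIcc : IntegrableOn (fun t => -((1 - ε) * h t)) (Set.Icc 0 T) := by
      rw [integrableOn_Icc_iff_integrableOn_Ioc]
      exact ((hint.mono_set (Set.Ioc_subset_Ioi_self)).const_mul _).neg
    have hstep := intervalIntegral.sub_le_integral_of_hasDeriv_right_of_le (g := fun s => Vhat (φ s))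
      (g' := fun t => DV (φ t) ⬝ᵥ (f (φ t) + g (φ t) *ᵥ uhat (φ t)))
      (φ := fun t => -((1 - ε) * h t)) hT hcont
      (fun t ht => ((hchain t ht.1.le).hasDerivWithinAt))
      hintIcc
      (fun t ht => key (φ t) (hφΩ t ht.1.le))
    rw [hφ0] at hstep
    have : (∫ t in (0:ℝ)..T, -((1 - ε) * h t)) = -((1 - ε) * ∫ t in (0:ℝ)..T, h t) := by
      rw [intervalIntegral.integral_neg, intervalIntegral.integral_const_mul]
    rw [this] at hstep
    linarith
  have hlim1 : Tendsto (fun T => (1 - ε) * ∫ t in (0:ℝ)..T, h t) atTop (𝓝 ((1 - ε) * J)) := by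
    rw [hJ]
    exact (intervalIntegral_tendsto_integral_Ioi 0 hint tendsto_id).const_mul _
  have hlim2 : Tendsto (fun T => Vhat x - Vhat (φ T)) atTop (𝓝 (Vhat x)) := by
    simpa using (tendsto_const_nhds (x := Vhat x)).sub hVlim
  have hfirst : (1 - ε) * J ≤ Vhat x := by
    refine le_of_tendsto_of_tendsto hlim1 hlim2 ?_
    filter_upwards [eventually_ge_atTop (0:ℝ)] with T hT
    exact main T hT
  refine ⟨hfirst, ?_⟩
  have : Vstar ≤ J := hVstar ▸ csInf_le hbdd hJmem
  exact mul_le_mul_of_nonneg_left this h1ε
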